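/- Let (X, R, C, F) be a catalytic reaction system. A nonempty finite subset R' ⊆ R is F-generated if and only if R' admits an enumeration r_1, …, r_k such that for each i, every reactant of r_i lies in F ∪ ⋃_{j<i} π(r_j). -/

import Mathlib

/-- A catalytic reaction system (CRS): molecule types `M`, reactions `R`,
each reaction has a finite nonempty set of reactants and of products,
a catalysis relation, and a food set. -/
structure CRS (M R : Type*) where
  reactants : R → Finset M
  products : R → Finset M
  reactants_nonempty : ∀ r, (reactants r).Nonempty
  products_nonempty : ∀ r, (products r).Nonempty
  catalyzes : M → R → Prop
  food : Set M

namespace CRS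

variable {M R : Type*}

/-- The closure `cl_{R'}(F)`: the smallest set `W ⊇ F` such that for every
reaction in `R'` whose reactants all lie in `W`, the products lie in `W`. -/
def closure (Q : CRS M R) (R' : Set R) : Set M :=
  ⋂₀ {W : Set M | Q.food ⊆ W ∧
      ∀ r ∈ R', (Q.reactants r : Set M) ⊆ W → (Q.products r : Set M) ⊆ W}

/-- `R'` is F-generated: every reactant of every reaction in `R'` lies in the
closure of the food set under `R'`. -/
def FGenerated (Q : CRS M R) (R' : Set R) : Prop :=
  ∀ r ∈ R', (Q.reactants r : Set M) ⊆ Q.closure R'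

/-- `R'` is reflexively autocatalytic: every reaction in `R'` is catalyzed by
some molecule in the food set or among the products of reactions in `R'`. -/
def ReflexivelyAutocatalytic (Q : CRS M R) (R' : Set R) : Prop :=
  ∀ r ∈ R', ∃ x ∈ Q.food ∪ ⋃ r' ∈ R', (Q.products r' : Set M), Q.catalyzes x r

/-- A RAF: a nonempty subset of reactions that is both reflexively
autocatalytic and F-generated. -/
def RAF (Q : CRS M R) (R' : Set R) : Prop :=
  R'.Nonempty ∧ Q.ReflexivelyAutocatalytic R' ∧ Q.FGenerated R'

/-- The molecules available before step `i` of a sequence of reactions: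
the food set together with the products of the earlier reactions. -/
def priorAvailable (Q : CRS M R) {k : ℕ} (r : Fin k → R) (i : Fin k) : Set M :=
  Q.food ∪ ⋃ j : Fin k, ⋃ _ : j < i, (Q.products (r j) : Set M)

/-- A CAF sequence: a sequence of distinct reactions in which each reaction's
reactants are available from (and it has a catalyst in) the food set together
with the products of earlier reactions in the sequence. -/
def CAFSeq (Q : CRS M R) {k : ℕ} (r : Fin k → R) : Prop :=
  Function.Injective r ∧
    (∀ i, (Q.reactants (r i) : Set M) ⊆ Q.priorAvailable r i) ∧
    (∀ i, ∃ x ∈ Q.priorAvailable r i, Q.catalyzes x (r i))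

end CRS

namespace CRS
variable {M R : Type*}

def clo (Q : CRS M R) (F : Set M) (R' : Set R) : Set M :=
  ⋂₀ {W : Set M | F ⊆ W ∧
      ∀ r ∈ R', (Q.reactants r : Set M) ⊆ W → (Q.products r : Set M) ⊆ W}

lemma food_subset_clo (Q : CRS M R) (F : Set M) (R' : Set R) : F ⊆ Q.clo F R' :=
  fun _ hx => Set.mem_sInter.2 fun _ hW => hW.1 hx

lemma clo_closed (Q : CRS M R) (F : Set M) (R' : Set R) {r : R} (hr : r ∈ R')
    (h : (Q.reactants r : Set M) ⊆ Q.clo F R') : (Q.products r : Set M) ⊆ Q.clo F R' :=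
  fun _ hx => Set.mem_sInter.2 fun W hW =>
    hW.2 r hr (h.trans (Set.sInter_subset_of_mem hW)) hx

lemma clo_subset (Q : CRS M R) {F W : Set M} {R' : Set R} (h1 : F ⊆ W)
    (h2 : ∀ r ∈ R', (Q.reactants r : Set M) ⊆ W → (Q.products r : Set M) ⊆ W) :
    Q.clo F R' ⊆ W :=
  Set.sInter_subset_of_mem ⟨h1, h2⟩

lemma exists_first (Q : CRS M R) {F : Set M} {R' : Set R} (hne : R'.Nonempty)
    (hgen : ∀ r ∈ R', (Q.reactants r : Set M) ⊆ Q.clo F R') :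
    ∃ r₀ ∈ R', (Q.reactants r₀ : Set M) ⊆ F := by
  by_contra h
  push_neg at h
  have hsub : Q.clo F R' ⊆ F :=
    Q.clo_subset le_rfl (fun r hr hre => absurd hre (h r hr))
  obtain ⟨r, hr⟩ := hne
  exact h r hr ((hgen r hr).trans hsub)

lemma clo_step (Q : CRS M R) {F : Set M} {R' : Set R} {r₀ : R} (hr₀ : r₀ ∈ R')
    (h : (Q.reactants r₀ : Set M) ⊆ F) :
    Q.clo F R' ⊆ Q.clo (F ∪ (Q.products r₀ : Set M)) (R' \ {r₀}) := by
  apply Q.clo_subset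
  · exact (Set.subset_union_left).trans (Q.food_subset_clo _ _)
  · intro r hr hre
    by_cases hrr : r = r₀
    · subst hrr
      exact (Set.subset_union_right).trans (Q.food_subset_clo _ _)
    · exact Q.clo_closed _ _ ⟨hr, hrr⟩ hre

lemma main_aux (Q : CRS M R) : ∀ (n : ℕ) (F : Set M) (R' : Set R), R'.Finite →
    R'.ncard = n → (∀ r ∈ R', (Q.reactants r : Set M) ⊆ Q.clo F R') →
    ∃ (k : ℕ) (r : Fin k → R), Function.Injective r ∧ Set.range r = R' ∧
        ∀ i : Fin k, (Q.reactants (r i) : Set M) ⊆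
          F ∪ ⋃ j : Fin k, ⋃ _ : j < i, (Q.products (r j) : Set M) := by
  intro n
  induction n with
  | zero =>
    intro F R' hfin hcard _
    have : R' = ∅ := (Set.ncard_eq_zero hfin).1 hcard
    subst this
    exact ⟨0, Fin.elim0, fun i => i.elim0, by simp, fun i => i.elim0⟩
  | succ n ih =>
    intro F R' hfin hcard hgen
    have hne : R'.Nonempty := Set.nonempty_of_ncard_ne_zero (by omega)
    obtain ⟨r₀, hr₀, hre₀⟩ := Q.exists_first hne hgen
    have hcard' : (R' \ {r₀}).ncard = n := by
      rw [Set.ncard_diff_singleton_of_mem hr₀, hcard]; omega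
    have hgen' : ∀ r ∈ R' \ {r₀}, (Q.reactants r : Set M) ⊆
        Q.clo (F ∪ (Q.products r₀ : Set M)) (R' \ {r₀}) := fun r hr =>
      (hgen r hr.1).trans (Q.clo_step hr₀ hre₀)
    obtain ⟨k, s, hinj, hrange, hseq⟩ :=
      ih (F ∪ (Q.products r₀ : Set M)) (R' \ {r₀}) hfin.diff hcard' hgen'
    refine ⟨k + 1, Fin.cons r₀ s, ?_, ?_, ?_⟩
    · intro i j hij
      have hns : r₀ ∉ Set.range s := by
        rw [hrange]; simp
      induction i using Fin.cases <;> induction j using Fin.cases <;>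
        simp [Fin.cons] at hij ⊢
      · exact absurd ⟨_, hij.symm⟩ hns
      · exact absurd ⟨_, hij⟩ hns
      · exact hinj hij
    · rw [Fin.range_cons, hrange]
      rw [Set.insert_diff_singleton, Set.insert_eq_self.2 hr₀]
    · intro i
      induction i using Fin.cases with
      | zero => exact hre₀.trans Set.subset_union_left
      | succ j =>
        refine (hseq j).trans (fun x hx => ?_)
        rcases hx with hx | hx
        · rcases hx with hx | hx
          · exact Or.inl hx
          · refine Or.inr (Set.mem_iUnion.2 ⟨0, Set.mem_iUnion.2 ⟨?_, ?_⟩⟩)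
            · exact Fin.succ_pos j
            · simpa using hx
        · obtain ⟨j', hj'⟩ := Set.mem_iUnion.1 hx
          obtain ⟨hlt, hmem⟩ := Set.mem_iUnion.1 hj'
          refine Or.inr (Set.mem_iUnion.2 ⟨j'.succ, Set.mem_iUnion.2 ⟨?_, ?_⟩⟩)
          · exact Fin.succ_lt_succ_iff.2 hlt
          · simpa using hmem


lemma closure_eq_clo (Q : CRS M R) (R' : Set R) : Q.closure R' = Q.clo Q.food R' := rfl

end CRS

/-- A nonempty finite subset `R'` of reactions is F-generated iff
it admits an enumeration `r_1, …, r_k` such that each reaction's reactants lie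
in the food set together with the products of earlier reactions. -/
theorem fGenerated_iff_exists_sequence {M R : Type*} (Q : CRS M R) (R' : Set R)
    (hne : R'.Nonempty) (hfin : R'.Finite) :
    Q.FGenerated R' ↔
      ∃ (k : ℕ) (r : Fin k → R), Function.Injective r ∧ Set.range r = R' ∧
        ∀ i : Fin k, (Q.reactants (r i) : Set M) ⊆
          Q.food ∪ ⋃ j : Fin k, ⋃ _ : j < i, (Q.products (r j) : Set M) := by
  constructor
  · intro hgen
    exact Q.main_aux R'.ncard Q.food R' hfin rfl
      (fun r hr => (Q.closure_eq_clo R') ▸ hgen r hr)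
  · rintro ⟨k, r, hinj, hrange, hseq⟩ r' hr'
    have key : ∀ m, ∀ i : Fin k, (i : ℕ) = m →
        (Q.reactants (r i) : Set M) ⊆ Q.closure R' := by
      intro m
      induction m using Nat.strong_induction_on with
      | _ m ih =>
        intro i him
        refine (hseq i).trans (fun x hx => ?_)
        rcases hx with hx | hx
        · exact Q.food_subset_clo Q.food R' hx
        · obtain ⟨j, hj⟩ := Set.mem_iUnion.1 hx
          obtain ⟨hlt, hmem⟩ := Set.mem_iUnion.1 hj
          have hrj : r j ∈ R' := hrange ▸ Set.mem_range_self j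
          exact Q.clo_closed Q.food R' hrj (ih j (by omega) j rfl) hmem
    obtain ⟨i, hi⟩ := hrange ▸ hr'
    exact hi ▸ key i i rfl
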